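/- arXiv:1404.4351 — 3 statements merged into one kernel-verified Lean document; each statement's English description precedes it below -/
import Mathlib

section
/- For every α with 0 < α < 2, the improper integral ∫₀^∞ x^{−α}·sin(x) dx converges and equals π/(2·Γ(α)·sin(απ/2)); equivalently, (2·∫₀^∞ x^{−α}·sin(x) dx)^{−1} = Γ(α)·sin(απ/2)/π. -/
open MeasureTheory Set Real Filter

-- integrability of Gamma kernel with rate r
lemma hker {a r : ℝ} (ha : 0 < a) (hr : 0 < r) :
    IntegrableOn (fun t : ℝ => t ^ (a - 1) * Real.exp (-(r * t))) (Ioi 0) := by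
  have := integrableOn_rpow_mul_exp_neg_mul_rpow (s := a - 1) (p := 1) (b := r)
    (by linarith) one_pos hr
  refine this.congr_fun (fun t ht => ?_) measurableSet_Ioi
  simp only [Real.rpow_one]
  ring_nf

-- inner integral formula
lemma hinner {t : ℝ} (T : ℝ) :
    ∫ x in (0:ℝ)..T, Real.exp (-(x * t)) * Real.sin x
      = ((Complex.exp ((-t + Complex.I) * T) - 1) / (-t + Complex.I)).im := by
  have hc : (-(t:ℂ) + Complex.I) ≠ 0 := by
    intro h
    have := congrArg Complex.im h
    simp at this
  have h1 := integral_exp_mul_complex (a := 0) (b := T) hc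
  have h2 : ∀ x : ℝ, Real.exp (-(x * t)) * Real.sin x
      = (Complex.exp ((-t + Complex.I) * x)).im := by
    intro x
    rw [Complex.exp_im]
    congr 1
    · congr 1
      simp [Complex.mul_re]
      ring
    · congr 1
      simp [Complex.mul_im]
  simp_rw [h2]
  have h3 : (fun x : ℝ => (Complex.exp ((-t + Complex.I) * x)).im)
      = fun x : ℝ => Complex.imCLM (Complex.exp ((-t + Complex.I) * x)) := rfl
  rw [h3, ContinuousLinearMap.intervalIntegral_comp_comm _
    (Continuous.intervalIntegrable (by continuity) _ _), h1]
  simp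

noncomputable def hval (T t : ℝ) : ℝ :=
  (Complex.exp ((-t + Complex.I) * T) / (-t + Complex.I)).im

lemma hc_ne (t : ℝ) : (-(t:ℂ) + Complex.I) ≠ 0 := by
  intro h
  have := congrArg Complex.im h
  simp at this

lemma gval_split (t T : ℝ) :
    ((Complex.exp ((-t + Complex.I) * T) - 1) / (-t + Complex.I)).im
      = 1 / (1 + t ^ 2) + hval T t := by
  rw [sub_div, Complex.sub_im]
  have : ((1:ℂ) / (-t + Complex.I)).im = -(1 / (1 + t ^ 2)) := by
    rw [Complex.div_im]
    simp [Complex.normSq_apply]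
    ring
  rw [this, hval]
  ring

lemma hval_bound (T t : ℝ) : |hval T t| ≤ Real.exp (-(T * t)) := by
  have h1 : |hval T t| ≤ ‖Complex.exp ((-t + Complex.I) * T) / (-t + Complex.I)‖ :=
    Complex.abs_im_le_norm _
  have h2 : ‖Complex.exp ((-t + Complex.I) * T)‖ = Real.exp (-(T * t)) := by
    rw [Complex.norm_exp]
    congr 1
    simp [Complex.mul_re]
    ring
  have h3 : 1 ≤ ‖(-(t:ℂ) + Complex.I)‖ := by
    have h4 : (‖(-(t:ℂ) + Complex.I)‖) ^ 2 = t ^ 2 + 1 := by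
      rw [Complex.sq_norm, Complex.normSq_apply]
      simp
      ring
    nlinarith [norm_nonneg (-(t:ℂ) + Complex.I)]
  calc |hval T t| ≤ _ := h1
    _ = Real.exp (-(T * t)) / ‖(-(t:ℂ) + Complex.I)‖ := by
        rw [norm_div, h2]
    _ ≤ Real.exp (-(T * t)) / 1 := by
        apply div_le_div_of_nonneg_left (Real.exp_nonneg _) one_pos h3
    _ = _ := by rw [div_one]

lemma hval_cont (T : ℝ) : Continuous (hval T) := by
  apply Complex.continuous_im.comp
  apply Continuous.div
  · continuity
  · continuity
  · exact fun t => hc_ne t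

lemma cont_rpow (c : ℝ) : ContinuousOn (fun t : ℝ => t ^ c) (Ioi (0:ℝ)) :=
  fun _ ht => continuousWithinAt_id.rpow_const (Or.inl (ne_of_gt ht))

lemma K_cont {α : ℝ} : ContinuousOn (fun t : ℝ => t ^ (α - 1) * (1 / (1 + t ^ 2)))
    (Ioi (0:ℝ)) := by
  apply (cont_rpow (α - 1)).mul
  apply ContinuousOn.div continuousOn_const
  · exact (continuousOn_const.add (continuousOn_id.pow 2))
  · intro t _; positivity

-- integrability of main kernel t^(α-1)/(1+t²)
lemma K_int {α : ℝ} (hα : 0 < α) (hα2 : α < 2) :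
    IntegrableOn (fun t : ℝ => t ^ (α - 1) * (1 / (1 + t ^ 2))) (Ioi 0) := by
  rw [show Ioi (0:ℝ) = Ioc 0 1 ∪ Ioi 1 from (Ioc_union_Ioi_eq_Ioi zero_le_one).symm,
    integrableOn_union]
  constructor
  · apply Integrable.mono' (g := fun t : ℝ => t ^ (α - 1))
    · have h : IntegrableOn (fun t : ℝ => t ^ (α - 1)) (Ioc (0:ℝ) 1) := by
        rw [← intervalIntegrable_iff_integrableOn_Ioc_of_le zero_le_one]
        exact intervalIntegral.intervalIntegrable_rpow' (by linarith)
      exact h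
    · exact (K_cont.mono (Ioc_subset_Ioi_self.trans (le_refl _))).aestronglyMeasurable
        measurableSet_Ioc
    · refine (ae_restrict_iff' measurableSet_Ioc).mpr (ae_of_all _ fun t ht => ?_)
      have ht0 : 0 < t := ht.1
      have h1 : (0:ℝ) < 1 + t ^ 2 := by positivity
      rw [Real.norm_eq_abs, abs_of_nonneg (by positivity)]
      nth_rewrite 2 [show t ^ (α - 1) = t ^ (α - 1) * 1 from (mul_one _).symm]
      apply mul_le_mul_of_nonneg_left _ (by positivity)
      rw [div_le_one h1]; nlinarith
  · apply Integrable.mono' (g := fun t : ℝ => t ^ (α - 3))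
    · exact integrableOn_Ioi_rpow_of_lt (by linarith) zero_lt_one
    · exact (K_cont.mono (Ioi_subset_Ioi zero_le_one)).aestronglyMeasurable measurableSet_Ioi
    · refine (ae_restrict_iff' measurableSet_Ioi).mpr (ae_of_all _ fun t ht => ?_)
      have ht1 : (1:ℝ) < t := ht
      have ht0 : (0:ℝ) < t := by linarith
      have h1 : (0:ℝ) < 1 + t ^ 2 := by positivity
      rw [Real.norm_eq_abs, abs_of_nonneg (by positivity)]
      have h2 : t ^ (α - 3) = t ^ (α - 1) * t ^ (-2:ℝ) := by
        rw [← Real.rpow_add ht0]; norm_num; ring_nf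
      rw [h2]
      apply mul_le_mul_of_nonneg_left _ (by positivity)
      rw [Real.rpow_neg ht0.le, Real.rpow_two]
      rw [div_eq_inv_mul, mul_one]
      apply inv_anti₀ (by positivity)
      nlinarith

lemma exp_int {c : ℝ} (hc : 0 < c) :
    ∫ u in Ioi (0:ℝ), Real.exp (-(c * u)) = 1 / c := by
  have := Real.integral_rpow_mul_exp_neg_mul_Ioi zero_lt_one hc
  simp only [sub_self, Real.rpow_zero, one_mul, Real.rpow_one, Real.Gamma_one,
    mul_one] at this
  exact this

lemma exp_int' {c : ℝ} (hc : 0 < c) :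
    IntegrableOn (fun u : ℝ => Real.exp (-(c * u))) (Ioi (0:ℝ)) := by
  refine (exp_neg_integrableOn_Ioi 0 hc).congr_fun (fun u _ => ?_) measurableSet_Ioi
  simp only [neg_mul]

lemma valM {α : ℝ} (hα : 0 < α) (hα2 : α < 2) :
    ∫ t in Ioi (0:ℝ), t ^ (α - 1) * (1 / (1 + t ^ 2))
      = Real.pi / (2 * Real.sin (α * Real.pi / 2)) := by
  have hsin : 0 < Real.sin (α * Real.pi / 2) := by
    apply Real.sin_pos_of_pos_of_lt_pi
    · positivity
    · calc α * Real.pi / 2 < 2 * Real.pi / 2 := by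
            apply div_lt_div_of_pos_right _ two_pos
            exact mul_lt_mul_of_pos_right hα2 Real.pi_pos
        _ = Real.pi := by ring
  -- the product function
  set F : ℝ × ℝ → ℝ := fun p => p.1 ^ (α - 1) * Real.exp (-((1 + p.1 ^ 2) * p.2)) with hF
  have hFcont : ContinuousOn F ((Ioi 0) ×ˢ (Ioi 0)) := by
    apply ContinuousOn.mul
    · exact (cont_rpow (α - 1)).comp continuous_fst.continuousOn
        (fun p hp => hp.1)
    · exact (Real.continuous_exp.comp (by continuity)).continuousOn
  have hFmeas : AEStronglyMeasurable F
      ((volume.restrict (Ioi (0:ℝ))).prod (volume.restrict (Ioi (0:ℝ)))) := by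
    rw [Measure.prod_restrict]
    exact hFcont.aestronglyMeasurable (measurableSet_Ioi.prod measurableSet_Ioi)
  have hnorm : ∀ t : ℝ, t ∈ Ioi (0:ℝ) →
      (fun u => ‖F (t, u)‖) = fun u : ℝ => t ^ (α - 1) * Real.exp (-((1 + t ^ 2) * u)) := by
    intro t ht
    funext u
    rw [Real.norm_eq_abs, abs_of_nonneg]
    have : (0:ℝ) < t := ht
    positivity
  have hint : ∀ t : ℝ, t ∈ Ioi (0:ℝ) → Integrable (fun u => F (t, u))
      (volume.restrict (Ioi (0:ℝ))) := by
    intro t ht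
    have ht0 : (0:ℝ) < t := ht
    have h1 : (0:ℝ) < 1 + t ^ 2 := by positivity
    have := (exp_int' h1).const_mul (t ^ (α - 1))
    simpa only [hF] using this
  have hFint : Integrable F
      ((volume.restrict (Ioi (0:ℝ))).prod (volume.restrict (Ioi (0:ℝ)))) := by
    rw [MeasureTheory.integrable_prod_iff hFmeas]
    constructor
    · exact (ae_restrict_iff' measurableSet_Ioi).mpr (ae_of_all _ hint)
    · apply (K_int hα hα2).congr
      refine (ae_restrict_iff' measurableSet_Ioi).mpr (ae_of_all _ fun t ht => ?_)
      have ht0 : (0:ℝ) < t := ht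
      show t ^ (α - 1) * (1 / (1 + t ^ 2)) = ∫ y in Ioi (0:ℝ), ‖F (t, y)‖
      rw [hnorm t ht, MeasureTheory.integral_const_mul, exp_int (by positivity)]
  -- first step : K t = ∫ u, F (t,u)
  have step1 : ∫ t in Ioi (0:ℝ), t ^ (α - 1) * (1 / (1 + t ^ 2))
      = ∫ t in Ioi (0:ℝ), ∫ u in Ioi (0:ℝ), F (t, u) := by
    refine setIntegral_congr_fun measurableSet_Ioi (fun t ht => ?_)
    have ht0 : (0:ℝ) < t := ht
    rw [hF]
    simp only
    rw [MeasureTheory.integral_const_mul, exp_int (by positivity)]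
  rw [step1, MeasureTheory.integral_integral_swap hFint]
  -- inner integral over t
  have step2 : ∀ u : ℝ, u ∈ Ioi (0:ℝ) →
      (∫ t in Ioi (0:ℝ), F (t, u))
        = Real.exp (-u) * (u ^ (-(α/2)) * (1/2) * Real.Gamma (α/2)) := by
    intro u hu
    have hu0 : (0:ℝ) < u := hu
    have key := integral_rpow_mul_exp_neg_mul_rpow (p := 2) (q := α - 1) (b := u)
      two_pos (by linarith) hu0
    have : ∫ t in Ioi (0:ℝ), F (t, u)
        = ∫ t in Ioi (0:ℝ), Real.exp (-u) * (t ^ (α - 1) * Real.exp (-u * t ^ (2:ℝ))) := by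
      refine setIntegral_congr_fun measurableSet_Ioi (fun t ht => ?_)
      have ht0 : (0:ℝ) < t := ht
      rw [hF]
      simp only
      rw [Real.rpow_two, show -((1 + t ^ 2) * u) = -u + -(u * t ^ 2) by ring,
        Real.exp_add]
      ring
    rw [this, MeasureTheory.integral_const_mul, key,
      show α - 1 + 1 = α by ring, neg_div]
  rw [setIntegral_congr_fun measurableSet_Ioi step2]
  have step3 : ∫ u in Ioi (0:ℝ), Real.exp (-u) * (u ^ (-(α/2)) * (1/2) * Real.Gamma (α/2))
      = (1/2) * Real.Gamma (α/2) * ∫ u in Ioi (0:ℝ), Real.exp (-u) * u ^ ((1 - α/2) - 1) := by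
    rw [← MeasureTheory.integral_const_mul]
    refine setIntegral_congr_fun measurableSet_Ioi (fun u hu => ?_)
    rw [show (1 - α/2) - 1 = -(α/2) by ring]
    ring
  rw [step3, ← Real.Gamma_eq_integral (by linarith : (0:ℝ) < 1 - α/2)]
  have hrefl : Real.Gamma (α/2) * Real.Gamma (1 - α/2)
      = Real.pi / Real.sin (α * Real.pi / 2) := by
    rw [Real.Gamma_mul_Gamma_one_sub (α/2)]
    congr 1
    ring
  rw [mul_assoc, hrefl]
  rw [eq_div_iff (by positivity)]
  field_simp
  rw [mul_comm Real.pi α]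
  exact div_self hsin.ne'

lemma habs_sin {x : ℝ} (hx : 0 ≤ x) : |Real.sin x| ≤ x := by
  rcases le_or_gt x 1 with h | h
  · rw [abs_of_nonneg (Real.sin_nonneg_of_nonneg_of_le_pi hx
      (h.trans (by linarith [Real.pi_gt_three])))]
    exact Real.sin_le hx
  · calc |Real.sin x| ≤ 1 := Real.abs_sin_le_one x
      _ ≤ x := h.le

lemma hval_int {α T : ℝ} (hα : 0 < α) (hT : 0 < T) :
    IntegrableOn (fun t : ℝ => t ^ (α - 1) * hval T t) (Ioi 0) := by
  apply Integrable.mono' (g := fun t : ℝ => t ^ (α - 1) * Real.exp (-(T * t)))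
  · exact hker hα hT
  · exact ((cont_rpow (α - 1)).mul (hval_cont T).continuousOn).aestronglyMeasurable
      measurableSet_Ioi
  · refine (ae_restrict_iff' measurableSet_Ioi).mpr (ae_of_all _ fun t ht => ?_)
    have ht0 : (0:ℝ) < t := ht
    rw [Real.norm_eq_abs, abs_mul, abs_of_nonneg (Real.rpow_nonneg ht0.le _)]
    exact mul_le_mul_of_nonneg_left (hval_bound T t) (Real.rpow_nonneg ht0.le _)

lemma err_bound {α T : ℝ} (hα : 0 < α) (hT : 0 < T) :
    ‖∫ t in Ioi (0:ℝ), t ^ (α - 1) * hval T t‖ ≤ (1 / T) ^ α * Real.Gamma α := by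
  rw [← Real.integral_rpow_mul_exp_neg_mul_Ioi hα hT]
  apply MeasureTheory.norm_integral_le_of_norm_le (hker hα hT)
  refine (ae_restrict_iff' measurableSet_Ioi).mpr (ae_of_all _ fun t ht => ?_)
  have ht0 : (0:ℝ) < t := ht
  rw [Real.norm_eq_abs, abs_mul, abs_of_nonneg (Real.rpow_nonneg ht0.le _)]
  exact mul_le_mul_of_nonneg_left (hval_bound T t) (Real.rpow_nonneg ht0.le _)

lemma repr_lemma {α : ℝ} (hα : 0 < α) (hα2 : α < 2) {T : ℝ} (hT : 0 < T) :
    ∫ x in (0:ℝ)..T, x ^ (-α) * Real.sin x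
      = (Real.Gamma α)⁻¹ * ∫ t in Ioi (0:ℝ),
          t ^ (α - 1) * (1 / (1 + t ^ 2) + hval T t) := by
  have hΓ : 0 < Real.Gamma α := Real.Gamma_pos_of_pos hα
  set G : ℝ × ℝ → ℝ :=
    fun p => (p.2 ^ (α - 1) * Real.exp (-(p.1 * p.2))) * Real.sin p.1 with hG
  have hGcont : ContinuousOn G ((Ioc 0 T) ×ˢ (Ioi 0)) := by
    apply ContinuousOn.mul
    · apply ContinuousOn.mul
      · exact (cont_rpow (α - 1)).comp continuous_snd.continuousOn (fun p hp => hp.2)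
      · exact (Real.continuous_exp.comp (by continuity)).continuousOn
    · exact (Real.continuous_sin.comp continuous_fst).continuousOn
  have hGmeas : AEStronglyMeasurable G
      ((volume.restrict (Ioc (0:ℝ) T)).prod (volume.restrict (Ioi (0:ℝ)))) := by
    rw [Measure.prod_restrict]
    exact hGcont.aestronglyMeasurable (measurableSet_Ioc.prod measurableSet_Ioi)
  -- value of the inner t-integral including sin
  have hval_t : ∀ x : ℝ, x ∈ Ioc (0:ℝ) T →
      ∫ t in Ioi (0:ℝ), G (x, t) = x ^ (-α) * Real.Gamma α * Real.sin x := by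
    intro x hx
    have hx0 : (0:ℝ) < x := hx.1
    have : ∫ t in Ioi (0:ℝ), G (x, t)
        = (∫ t in Ioi (0:ℝ), t ^ (α - 1) * Real.exp (-(x * t))) * Real.sin x := by
      rw [← MeasureTheory.integral_mul_const]
    rw [this, Real.integral_rpow_mul_exp_neg_mul_Ioi hα hx0,
      show (1/x) ^ α = x ^ (-α) by
        rw [one_div, Real.inv_rpow hx0.le, ← Real.rpow_neg hx0.le]]
  -- integrability of G on the product
  have hGint : Integrable G
      ((volume.restrict (Ioc (0:ℝ) T)).prod (volume.restrict (Ioi (0:ℝ)))) := by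
    rw [MeasureTheory.integrable_prod_iff hGmeas]
    constructor
    · refine (ae_restrict_iff' measurableSet_Ioc).mpr (ae_of_all _ fun x hx => ?_)
      have hx0 : (0:ℝ) < x := hx.1
      have := (hker hα hx0).mul_const (Real.sin x)
      simpa only [hG] using this
    · have hbig : Integrable (fun x : ℝ => x ^ (-α) * Real.Gamma α * |Real.sin x|)
          (volume.restrict (Ioc (0:ℝ) T)) := by
        apply Integrable.mono' (g := fun x : ℝ => Real.Gamma α * x ^ (1 - α))
        · have h : IntegrableOn (fun x : ℝ => x ^ (1 - α)) (Ioc (0:ℝ) T) := by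
            rw [← intervalIntegrable_iff_integrableOn_Ioc_of_le hT.le]
            exact intervalIntegral.intervalIntegrable_rpow' (by linarith)
          exact h.const_mul _
        · apply ContinuousOn.aestronglyMeasurable _ measurableSet_Ioc
          apply ContinuousOn.mul
          · exact ((cont_rpow (-α)).mono (fun x hx => hx.1)).mul continuousOn_const
          · exact (continuous_abs.comp Real.continuous_sin).continuousOn
        · refine (ae_restrict_iff' measurableSet_Ioc).mpr (ae_of_all _ fun x hx => ?_)
          have hx0 : (0:ℝ) < x := hx.1
          rw [Real.norm_eq_abs, abs_of_nonneg (by positivity)]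
          calc x ^ (-α) * Real.Gamma α * |Real.sin x|
              ≤ x ^ (-α) * Real.Gamma α * x :=
                mul_le_mul_of_nonneg_left (habs_sin hx0.le) (by positivity)
            _ = Real.Gamma α * (x ^ (-α) * x ^ (1:ℝ)) := by rw [Real.rpow_one]; ring
            _ = Real.Gamma α * x ^ (1 - α) := by
                rw [← Real.rpow_add hx0]
                ring_nf
      apply hbig.congr
      refine (ae_restrict_iff' measurableSet_Ioc).mpr (ae_of_all _ fun x hx => ?_)
      have hx0 : (0:ℝ) < x := hx.1
      show x ^ (-α) * Real.Gamma α * |Real.sin x| = ∫ t in Ioi (0:ℝ), ‖G (x, t)‖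
      have : ∀ t : ℝ, t ∈ Ioi (0:ℝ) →
          ‖G (x, t)‖ = (t ^ (α - 1) * Real.exp (-(x * t))) * |Real.sin x| := by
        intro t ht
        have ht0 : (0:ℝ) < t := ht
        rw [hG]
        simp only
        rw [Real.norm_eq_abs, abs_mul, abs_of_nonneg (by positivity)]
      rw [setIntegral_congr_fun measurableSet_Ioi this, MeasureTheory.integral_mul_const,
        Real.integral_rpow_mul_exp_neg_mul_Ioi hα hx0,
        show (1/x) ^ α = x ^ (-α) by
          rw [one_div, Real.inv_rpow hx0.le, ← Real.rpow_neg hx0.le]]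
  -- main computation
  rw [intervalIntegral.integral_of_le hT.le]
  have step1 : ∫ x in Ioc (0:ℝ) T, x ^ (-α) * Real.sin x
      = ∫ x in Ioc (0:ℝ) T, (Real.Gamma α)⁻¹ * ∫ t in Ioi (0:ℝ), G (x, t) := by
    refine setIntegral_congr_fun measurableSet_Ioc (fun x hx => ?_)
    rw [hval_t x hx]
    field_simp
  rw [step1, MeasureTheory.integral_const_mul, MeasureTheory.integral_integral_swap hGint]
  congr 1
  refine setIntegral_congr_fun measurableSet_Ioi (fun t ht => ?_)
  have : ∫ x in Ioc (0:ℝ) T, G (x, t)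
      = t ^ (α - 1) * ∫ x in Ioc (0:ℝ) T, Real.exp (-(x * t)) * Real.sin x := by
    rw [← MeasureTheory.integral_const_mul]
    refine setIntegral_congr_fun measurableSet_Ioc (fun x hx => ?_)
    rw [hG]
    simp only
    ring
  rw [this, ← intervalIntegral.integral_of_le hT.le, hinner T, gval_split]

theorem stmt4 (α : ℝ) (hα : 0 < α) (hα2 : α < 2) :
    Filter.Tendsto (fun T : ℝ => ∫ x in (0 : ℝ)..T, x ^ (-α) * Real.sin x)
      Filter.atTop
      (nhds (Real.pi / (2 * Real.Gamma α * Real.sin (α * Real.pi / 2)))) := by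
  have hΓ : 0 < Real.Gamma α := Real.Gamma_pos_of_pos hα
  have hsin : 0 < Real.sin (α * Real.pi / 2) := by
    apply Real.sin_pos_of_pos_of_lt_pi
    · positivity
    · calc α * Real.pi / 2 < 2 * Real.pi / 2 := by
            apply div_lt_div_of_pos_right _ two_pos
            exact mul_lt_mul_of_pos_right hα2 Real.pi_pos
        _ = Real.pi := by ring
  have hL : Real.pi / (2 * Real.Gamma α * Real.sin (α * Real.pi / 2))
      = (Real.Gamma α)⁻¹ * (Real.pi / (2 * Real.sin (α * Real.pi / 2))) := by
    rw [eq_comm, inv_mul_eq_div, div_div]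
    ring_nf
  have key : ∀ T : ℝ, 1 ≤ T →
      ‖(∫ x in (0:ℝ)..T, x ^ (-α) * Real.sin x)
          - Real.pi / (2 * Real.Gamma α * Real.sin (α * Real.pi / 2))‖
        ≤ (Real.Gamma α)⁻¹ * ((1 / T) ^ α * Real.Gamma α) := by
    intro T hT1
    have hT : 0 < T := lt_of_lt_of_le one_pos hT1
    rw [repr_lemma hα hα2 hT, hL]
    have hsplit : ∫ t in Ioi (0:ℝ), t ^ (α - 1) * (1 / (1 + t ^ 2) + hval T t)
        = (∫ t in Ioi (0:ℝ), t ^ (α - 1) * (1 / (1 + t ^ 2)))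
          + ∫ t in Ioi (0:ℝ), t ^ (α - 1) * hval T t := by
      rw [← MeasureTheory.integral_add (K_int hα hα2) (hval_int hα hT)]
      exact setIntegral_congr_fun measurableSet_Ioi (fun t _ => by ring)
    rw [hsplit, valM hα hα2, ← mul_sub, add_sub_cancel_left, norm_mul,
      Real.norm_eq_abs (Real.Gamma α)⁻¹, abs_of_nonneg (inv_nonneg.mpr hΓ.le)]
    exact mul_le_mul_of_nonneg_left (err_bound hα hT) (inv_nonneg.mpr hΓ.le)
  have h0 : Tendsto (fun T : ℝ => (Real.Gamma α)⁻¹ * ((1 / T) ^ α * Real.Gamma α))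
      atTop (nhds 0) := by
    have h1 : Tendsto (fun T : ℝ => T ^ (-α)) atTop (nhds 0) := tendsto_rpow_neg_atTop hα
    have h2 : Tendsto (fun T : ℝ => (Real.Gamma α)⁻¹ * (T ^ (-α) * Real.Gamma α))
        atTop (nhds 0) := by
      have := (h1.mul_const (Real.Gamma α)).const_mul (Real.Gamma α)⁻¹
      simpa using this
    apply h2.congr'
    filter_upwards [eventually_gt_atTop (0:ℝ)] with T hT
    rw [one_div, Real.inv_rpow hT.le, ← Real.rpow_neg hT.le]
  rw [tendsto_iff_norm_sub_tendsto_zero]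
  exact squeeze_zero' (Eventually.of_forall fun T => norm_nonneg _)
    ((eventually_ge_atTop 1).mono key) h0
end

section
/- Let d ≥ 1, α ∈ (0,2], and for k = 1,…,d let c_k ∈ ℝ^d with c_k ≠ 0, β_k ∈ [−1,1], γ_k > 0, μ_k ∈ ℝ. Define λ_k^± = ‖c_k‖₂^α·γ_k·(1 ± β_k)/2, unit vectors s_k = c_k/‖c_k‖₂, and η_k = μ_k if α ≠ 1 and η_k = μ_k − (2β_kγ_k/π)·log‖c_k‖₂ if α = 1, and set μ̃ = Σ_{k=1}^d η_k·c_k ∈ ℝ^d. Then for all q ∈ ℝ^d, ∏_{k=1}^d φ(⟨c_k, q⟩ | α, β_k, γ_k, μ_k) = exp( − Σ_{k=1}^d [ λ_k^+·ψ(⟨s_k, q⟩|α) + λ_k^−·ψ(⟨−s_k, q⟩|α) ] + i·⟨μ̃, q⟩ ). In particular, every d-dimensional distribution whose characteristic function is q ↦ ∏_{k=1}^d φ(⟨c_k,q⟩|α,β_k,γ_k,μ_k) is a multivariate stable distribution whose spectral measure is the finite atomic measure on the unit sphere with mass λ_k^+ at s_k and λ_k^− at −s_k. -/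
open MeasureTheory ProbabilityTheory

/-- `r(q, α)` appearing in the stable characteristic function. -/
noncomputable def rPar (α q : ℝ) : ℝ :=
  if α = 1 then -(2 / Real.pi) * Real.log |q| else Real.tan (α * Real.pi / 2)

/-- The stable characteristic function `φ(q | α, β, γ, μ)`. -/
noncomputable def phi (α β γ μ q : ℝ) : ℂ :=
  Complex.exp (Complex.I * ((μ * q : ℝ) : ℂ) -
    ((γ * |q| ^ α : ℝ) : ℂ) * (1 - Complex.I * ((β * Real.sign q * rPar α q : ℝ) : ℂ)))


/-- `ψ(u | α) = |u|^α (1 - i sign(u) r(u, α))`. -/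
noncomputable def psi (α u : ℝ) : ℂ :=
  ((|u| ^ α : ℝ) : ℂ) * (1 - Complex.I * ((Real.sign u * rPar α u : ℝ) : ℂ))

open scoped RealInnerProductSpace

lemma key_stable (α : ℝ) (hα : 0 < α) (n : ℝ) (hn : 0 < n) (β γ μ u : ℝ) :
    Complex.I * ((μ * u : ℝ) : ℂ) -
      ((γ * |u| ^ α : ℝ) : ℂ) * (1 - Complex.I * ((β * Real.sign u * rPar α u : ℝ) : ℂ))
    = -( ((n ^ α * γ * (1 + β) / 2 : ℝ) : ℂ) * psi α (n⁻¹ * u) +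
         ((n ^ α * γ * (1 - β) / 2 : ℝ) : ℂ) * psi α (-(n⁻¹ * u)) )
      + Complex.I * (((if α = 1 then μ - 2 * β * γ / Real.pi * Real.log n else μ) * u : ℝ) : ℂ) := by
  by_cases hu : u = 0
  · simp [psi, hu, Real.sign_zero, abs_zero, Real.zero_rpow hα.ne']
  have habs : |n⁻¹ * u| = n⁻¹ * |u| := by
    rw [abs_mul, abs_of_pos (inv_pos.mpr hn)]
  have hrpow : (n⁻¹ * |u|) ^ α = (n ^ α)⁻¹ * |u| ^ α := by
    rw [Real.mul_rpow (inv_nonneg.mpr hn.le) (abs_nonneg u), Real.inv_rpow hn.le]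
  have hsign : Real.sign (n⁻¹ * u) = Real.sign u := by
    rcases lt_or_gt_of_ne hu with h | h
    · rw [Real.sign_of_neg h, Real.sign_of_neg (mul_neg_of_pos_of_neg (inv_pos.mpr hn) h)]
    · rw [Real.sign_of_pos h, Real.sign_of_pos (mul_pos (inv_pos.mpr hn) h)]
  have hnα : ((n ^ α : ℝ) : ℂ) ≠ 0 := by
    exact_mod_cast (Real.rpow_pos_of_pos hn α).ne'
  by_cases h1 : α = 1
  · subst h1
    have hlog : Real.log (n⁻¹ * |u|) = Real.log |u| - Real.log n := by
      rw [Real.log_mul (inv_ne_zero hn.ne') (abs_ne_zero.mpr hu), Real.log_inv]; ring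
    simp only [psi, rPar, if_pos rfl, abs_neg, Real.sign_neg, habs, hrpow, hlog, hsign,
      Real.rpow_one] at *
    rcases lt_or_gt_of_ne hu with h | h
    · rw [Real.sign_of_neg h, abs_of_neg h] at *
      push_cast
      field_simp
      ring
    · rw [Real.sign_of_pos h, abs_of_pos h] at *
      push_cast
      field_simp
      ring
  · simp only [psi, rPar, if_neg h1, abs_neg, Real.sign_neg, habs, hrpow, hsign]
    push_cast
    field_simp
    ring

theorem stmt6 (d : ℕ) (hd : 1 ≤ d) (α : ℝ) (hα : 0 < α) (hα2 : α ≤ 2)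
    (c : Fin d → EuclideanSpace ℝ (Fin d)) (hc : ∀ k, c k ≠ 0)
    (β γ μ : Fin d → ℝ)
    (hβ : ∀ k, β k ∈ Set.Icc (-1 : ℝ) 1) (hγ : ∀ k, 0 < γ k) :
    ∀ q : EuclideanSpace ℝ (Fin d),
      ∏ k, phi α (β k) (γ k) (μ k) ⟪c k, q⟫ =
        Complex.exp (
          -(∑ k, (((‖c k‖ ^ α * γ k * (1 + β k) / 2 : ℝ) : ℂ) * psi α ⟪‖c k‖⁻¹ • c k, q⟫ +
              ((‖c k‖ ^ α * γ k * (1 - β k) / 2 : ℝ) : ℂ) * psi α ⟪-(‖c k‖⁻¹ • c k), q⟫)) +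
          Complex.I *
            ((⟪∑ k, (if α = 1 then μ k - 2 * β k * γ k / Real.pi * Real.log ‖c k‖ else μ k) • c k,
                q⟫ : ℝ) : ℂ)) := by
  intro q
  simp only [phi]
  rw [← Complex.exp_sum]
  congr 1
  rw [sum_inner]
  simp only [real_inner_smul_left, inner_neg_left]
  push_cast
  rw [Finset.mul_sum, ← Finset.sum_neg_distrib, ← Finset.sum_add_distrib]
  refine Finset.sum_congr rfl fun k _ => ?_
  have hnk : (0 : ℝ) < ‖c k‖ := norm_pos_iff.mpr (hc k)
  have := key_stable α hα ‖c k‖ hnk (β k) (γ k) (μ k) ⟪c k, q⟫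
  push_cast at this
  convert this using 3
end

section
/- Let 0 < α < 2 and γ > 0, and let ν be a probability measure on ℝ with characteristic function q ↦ exp(−γ·|q|^α). Then the second moment of ν diverges: ∫_ℝ x² dν(x) = ∞. -/
open MeasureTheory

theorem stmt16 (α γ : ℝ) (hα : 0 < α) (hα2 : α < 2) (hγ : 0 < γ)
    (ν : Measure ℝ) [IsProbabilityMeasure ν]
    (hν : ∀ q : ℝ, ∫ x, Complex.exp (Complex.I * ((q * x : ℝ) : ℂ)) ∂ν =
      Complex.exp (((-(γ * |q| ^ α) : ℝ) : ℂ))) :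
    ∫⁻ x, ENNReal.ofReal (x ^ 2) ∂ν = ⊤ := by
  by_contra h
  set M := (∫⁻ x, ENNReal.ofReal (x ^ 2) ∂ν).toReal with hMdef
  have hM0 : 0 ≤ M := ENNReal.toReal_nonneg
  -- x ^ 2 is integrable
  have hint2 : Integrable (fun x : ℝ => x ^ 2) ν := by
    refine ⟨(measurable_id.pow_const 2).aestronglyMeasurable, ?_⟩
    rw [hasFiniteIntegral_iff_ofReal (Filter.Eventually.of_forall fun x => sq_nonneg x)]
    exact lt_top_iff_ne_top.2 h
  have hM : ∫ x, x ^ 2 ∂ν = M := by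
    rw [integral_eq_lintegral_of_nonneg_ae (Filter.Eventually.of_forall fun x => sq_nonneg x)
      hint2.1]
  -- characteristic function real part
  have hcosint : ∀ q : ℝ, Integrable (fun x : ℝ => Real.cos (q * x)) ν := by
    intro q
    refine Integrable.mono' (integrable_const 1)
      ((Real.continuous_cos.comp (continuous_const.mul continuous_id)).aestronglyMeasurable) ?_
    filter_upwards with x
    simpa using Real.abs_cos_le_one (q * x)
  have hcos : ∀ q : ℝ, ∫ x, Real.cos (q * x) ∂ν = Real.exp (-(γ * |q| ^ α)) := by
    intro q
    have hi : Integrable (fun x : ℝ => Complex.exp (Complex.I * ((q * x : ℝ) : ℂ))) ν := by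
      refine Integrable.mono' (integrable_const 1) ?_ ?_
      · refine (Complex.continuous_exp.comp ?_).aestronglyMeasurable
        exact continuous_const.mul (Complex.continuous_ofReal.comp
          (continuous_const.mul continuous_id))
      · filter_upwards with x
        rw [mul_comm]
        simp [Complex.norm_exp]
    have hre : ∫ x, (Complex.exp (Complex.I * ((q * x : ℝ) : ℂ))).re ∂ν
        = (∫ x, Complex.exp (Complex.I * ((q * x : ℝ) : ℂ)) ∂ν).re := integral_re hi
    rw [hν q, Complex.exp_ofReal_re] at hre
    rw [← hre]
    refine integral_congr_ae (Filter.Eventually.of_forall fun x => ?_)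
    show Real.cos (q * x) = (Complex.exp (Complex.I * ((q * x : ℝ) : ℂ))).re
    rw [mul_comm Complex.I, Complex.exp_ofReal_mul_I_re]
  -- key bound
  have key : ∀ q : ℝ, 1 - Real.exp (-(γ * |q| ^ α)) ≤ q ^ 2 * M / 2 := by
    intro q
    have h1 : 1 - Real.exp (-(γ * |q| ^ α)) = ∫ x, (1 - Real.cos (q * x)) ∂ν := by
      rw [integral_sub (integrable_const 1) (hcosint q), integral_const, hcos q]
      simp
    have h2 : ∫ x, (1 - Real.cos (q * x)) ∂ν ≤ ∫ x, q ^ 2 * x ^ 2 / 2 ∂ν := by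
      refine integral_mono ((integrable_const 1).sub (hcosint q)) ?_ ?_
      · exact (hint2.const_mul (q ^ 2)).div_const 2
      · intro x
        have := Real.one_sub_sq_div_two_le_cos (x := q * x)
        simp only [mul_pow] at this ⊢
        linarith
    have h3 : ∫ x, q ^ 2 * x ^ 2 / 2 ∂ν = q ^ 2 * M / 2 := by
      rw [integral_div, integral_const_mul, hM]
    rw [h1]
    rw [← h3]
    exact h2
  -- choose small q
  set a := γ⁻¹ ^ α⁻¹ with ha
  set b := (γ / (2 * (M + 1))) ^ (2 - α)⁻¹ with hb
  have ha0 : 0 < a := Real.rpow_pos_of_pos (inv_pos.2 hγ) _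
  have hb0 : 0 < b := Real.rpow_pos_of_pos (div_pos hγ (by linarith)) _
  set q := min a b with hq
  have hq0 : 0 < q := lt_min ha0 hb0
  have h2α : (0:ℝ) < 2 - α := by linarith
  have hqa : q ^ α ≤ γ⁻¹ := by
    calc q ^ α ≤ a ^ α := Real.rpow_le_rpow hq0.le (min_le_left _ _) hα.le
      _ = γ⁻¹ := Real.rpow_inv_rpow (inv_pos.2 hγ).le hα.ne'
  have hqb : q ^ (2 - α) ≤ γ / (2 * (M + 1)) := by
    calc q ^ (2 - α) ≤ b ^ (2 - α) := Real.rpow_le_rpow hq0.le (min_le_right _ _) h2α.le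
      _ = γ / (2 * (M + 1)) := Real.rpow_inv_rpow (div_pos hγ (by linarith)).le h2α.ne'
  have hqpow : 0 < q ^ α := Real.rpow_pos_of_pos hq0 _
  -- t := γ * q ^ α ≤ 1
  have ht0 : 0 < γ * q ^ α := mul_pos hγ hqpow
  have ht1 : γ * q ^ α ≤ 1 := by
    calc γ * q ^ α ≤ γ * γ⁻¹ := mul_le_mul_of_nonneg_left hqa hγ.le
      _ = 1 := mul_inv_cancel₀ hγ.ne'
  -- lower bound: 1 - exp(-t) ≥ t / 2
  have hexp : Real.exp (-(γ * q ^ α)) ≤ 1 - γ * q ^ α / 2 := by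
    generalize hgen : γ * q ^ α = t at ht0 ht1
    have h1t : (0:ℝ) < 1 + t := by linarith
    have he : 1 + t ≤ Real.exp t := by linarith [Real.add_one_le_exp t]
    have hinv : Real.exp (-t) ≤ (1 + t)⁻¹ := by
      rw [Real.exp_neg]
      exact inv_anti₀ h1t he
    refine hinv.trans ?_
    rw [inv_le_iff_one_le_mul₀ h1t]
    nlinarith
  -- q^2 = q^α * q^(2-α)
  have hqsq : (q : ℝ) ^ 2 = q ^ α * q ^ (2 - α) := by
    rw [← Real.rpow_natCast q 2, ← Real.rpow_add hq0]
    norm_num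
  have hlt : q ^ 2 * M < γ * q ^ α := by
    rw [hqsq]
    have h1 : q ^ α * q ^ (2 - α) * M ≤ q ^ α * (γ / (2 * (M + 1))) * M := by
      have := mul_le_mul_of_nonneg_left hqb hqpow.le
      exact mul_le_mul_of_nonneg_right this hM0
    refine h1.trans_lt ?_
    have h2 : γ / (2 * (M + 1)) * M < γ := by
      rw [div_mul_eq_mul_div, div_lt_iff₀ (by linarith)]
      nlinarith
    calc q ^ α * (γ / (2 * (M + 1))) * M = q ^ α * (γ / (2 * (M + 1)) * M) := by ring
      _ < q ^ α * γ := by exact mul_lt_mul_of_pos_left h2 hqpow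
      _ = γ * q ^ α := by ring
  -- contradiction
  have hk := key q
  rw [abs_of_pos hq0] at hk
  linarith
end
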